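/- Let U = {(x,y,y₁,y₂,z) ∈ ℝ⁵ : y₂ ≠ 0}, X₁ = ∂/∂y₂, X₂ = ∂/∂x + y₁ ∂/∂y + y₂ ∂/∂y₁ + (y + y₂^{1/3}) ∂/∂z, and S₂ = x ∂/∂x − y ∂/∂y − 2y₁ ∂/∂y₁ − 3y₂ ∂/∂y₂. Then on U one has [S₂, X₁] = 3 X₁ and [S₂, X₂] = −X₂. In particular, S₂ is an infinitesimal symmetry of the Monge distribution of z' = y + (y'')^{1/3}. -/

import Mathlib

/-- Lie bracket of vector fields on ℝ⁵, `[V,W](p) = DW(p)(V(p)) − DV(p)(W(p))`. -/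
noncomputable def lieBracket (V W : (Fin 5 → ℝ) → (Fin 5 → ℝ)) :
    (Fin 5 → ℝ) → (Fin 5 → ℝ) :=
  fun p => fderiv ℝ W p (V p) - fderiv ℝ V p (W p)

/-- The real odd cube root: `cbrt t = sign(t) · |t|^(1/3)`. -/
noncomputable def cbrt (t : ℝ) : ℝ := Real.sign t * |t| ^ ((1 : ℝ) / 3)

/-- `X₁ = ∂/∂y₂`, coordinates `(x, y, y₁, y₂, z) = (p 0, p 1, p 2, p 3, p 4)`. -/
noncomputable def X₁ : (Fin 5 → ℝ) → (Fin 5 → ℝ) := fun _ => ![0, 0, 0, 1, 0]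

/-- `X₂ = ∂/∂x + y₁ ∂/∂y + y₂ ∂/∂y₁ + (y + y₂^{1/3}) ∂/∂z`. -/
noncomputable def X₂ : (Fin 5 → ℝ) → (Fin 5 → ℝ) :=
  fun p => ![1, p 2, p 3, 0, p 1 + cbrt (p 3)]

/-- `S₂ = x ∂/∂x − y ∂/∂y − 2y₁ ∂/∂y₁ − 3y₂ ∂/∂y₂`. -/
noncomputable def S₂ : (Fin 5 → ℝ) → (Fin 5 → ℝ) :=
  fun p => ![p 0, -p 1, -2 * p 2, -3 * p 3, 0]

open ContinuousLinearMap in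
/-- Derivative of `S₂` (which is linear). -/
noncomputable def LS : (Fin 5 → ℝ) →L[ℝ] (Fin 5 → ℝ) :=
  ContinuousLinearMap.pi
    ![proj 0, -proj 1, (-2 : ℝ) • proj 2, (-3 : ℝ) • proj 3, 0]

open ContinuousLinearMap in
/-- Derivative of `X₂` at a point with `p 3 ≠ 0`; `c` is the derivative of `cbrt` at `p 3`. -/
noncomputable def LX (c : ℝ) : (Fin 5 → ℝ) →L[ℝ] (Fin 5 → ℝ) :=
  ContinuousLinearMap.pi
    ![0, proj 2, proj 3, 0, proj 1 + c • proj 3]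

lemma hasDerivAt_cbrt {t : ℝ} (ht : t ≠ 0) :
    HasDerivAt cbrt ((1 / 3) * |t| ^ (-(2 : ℝ) / 3)) t := by
  rcases ht.lt_or_gt with h | h
  · -- t < 0 : near t, cbrt x = -((-x) ^ (1/3))
    have hneg : HasDerivAt (fun x : ℝ => -((-x) ^ ((1 : ℝ) / 3)))
        ((1 / 3) * |t| ^ (-(2 : ℝ) / 3)) t := by
      have h1 : HasDerivAt (fun x : ℝ => (-x) ^ ((1 : ℝ) / 3))
          (((1 : ℝ) / 3) * (-t) ^ ((1 : ℝ) / 3 - 1) * (-1)) t := by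
        exact (Real.hasDerivAt_rpow_const (p := (1 : ℝ) / 3)
          (Or.inl (by linarith))).comp t ((hasDerivAt_neg t))
      have : HasDerivAt (fun x : ℝ => -((-x) ^ ((1 : ℝ) / 3)))
          (-(((1 : ℝ) / 3) * (-t) ^ ((1 : ℝ) / 3 - 1) * (-1))) t := h1.neg
      convert this using 1
      have habs : |t| = -t := abs_of_neg h
      rw [habs]
      ring_nf
    refine hneg.congr_of_eventuallyEq ?_
    filter_upwards [Iio_mem_nhds h] with x hx
    have hx' : (x : ℝ) < 0 := hx
    simp only [cbrt, Real.sign_of_neg hx', abs_of_neg hx']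
    ring
  · -- t > 0 : near t, cbrt x = x ^ (1/3)
    have hpos : HasDerivAt (fun x : ℝ => x ^ ((1 : ℝ) / 3))
        ((1 / 3) * |t| ^ (-(2 : ℝ) / 3)) t := by
      have h1 := Real.hasDerivAt_rpow_const (x := t) (p := (1 : ℝ) / 3)
        (Or.inl (ne_of_gt h))
      convert h1 using 1
      rw [abs_of_pos h]
      norm_num
    refine hpos.congr_of_eventuallyEq ?_
    filter_upwards [Ioi_mem_nhds h] with x hx
    have hx' : (0 : ℝ) < x := hx
    simp only [cbrt, Real.sign_of_pos hx', abs_of_pos hx', one_mul]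

lemma cbrt_key {t : ℝ} (ht : t ≠ 0) :
    t * ((1 / 3) * |t| ^ (-(2 : ℝ) / 3)) * 3 = cbrt t := by
  have habs : (0 : ℝ) < |t| := abs_pos.mpr ht
  have : |t| * |t| ^ (-(2 : ℝ) / 3) = |t| ^ ((1 : ℝ) / 3) := by
    nth_rewrite 1 [← Real.rpow_one |t|]
    rw [← Real.rpow_add habs]
    norm_num
  calc t * ((1 / 3) * |t| ^ (-(2 : ℝ) / 3)) * 3
      = (Real.sign t * |t|) * |t| ^ (-(2 : ℝ) / 3) := by
        have hs : Real.sign t * |t| = t := by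
          rcases ht.lt_or_gt with h | h
          · rw [Real.sign_of_neg h, abs_of_neg h]; ring
          · rw [Real.sign_of_pos h, abs_of_pos h]; ring
        rw [hs]; ring
    _ = Real.sign t * (|t| * |t| ^ (-(2 : ℝ) / 3)) := by ring
    _ = cbrt t := by rw [this]; rfl

open ContinuousLinearMap in
lemma hasFDerivAt_S₂ (p : Fin 5 → ℝ) : HasFDerivAt S₂ LS p := by
  rw [LS, hasFDerivAt_pi]
  intro i
  fin_cases i <;>
    simp only [S₂, Matrix.cons_val_zero, Matrix.cons_val_one, Matrix.head_cons,
      Matrix.cons_val_two, Matrix.tail_cons, Matrix.cons_val_three, Matrix.cons_val_four,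
      Matrix.cons_val_fin_one, Fin.isValue]
  · exact (hasFDerivAt_apply 0 p)
  · exact (hasFDerivAt_apply 1 p).neg
  · exact ((hasFDerivAt_apply 2 p).const_mul (-2 : ℝ)).congr_fderiv (by
      ext v; simp [smul_apply])
  · exact ((hasFDerivAt_apply 3 p).const_mul (-3 : ℝ)).congr_fderiv (by
      ext v; simp [smul_apply])
  · exact hasFDerivAt_const 0 p

open ContinuousLinearMap in
lemma hasFDerivAt_X₂ {p : Fin 5 → ℝ} (hp : p 3 ≠ 0) :
    HasFDerivAt X₂ (LX ((1 / 3) * |p 3| ^ (-(2 : ℝ) / 3))) p := by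
  rw [LX, hasFDerivAt_pi]
  intro i
  fin_cases i <;>
    simp only [X₂, Matrix.cons_val_zero, Matrix.cons_val_one, Matrix.head_cons,
      Matrix.cons_val_two, Matrix.tail_cons, Matrix.cons_val_three, Matrix.cons_val_four,
      Matrix.cons_val_fin_one, Fin.isValue]
  · exact hasFDerivAt_const 1 p
  · exact hasFDerivAt_apply 2 p
  · exact hasFDerivAt_apply 3 p
  · exact hasFDerivAt_const 0 p
  · exact (hasFDerivAt_apply 1 p).add
      ((hasDerivAt_cbrt hp).comp_hasFDerivAt (f := fun x : Fin 5 → ℝ => x 3) p (hasFDerivAt_apply 3 p))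

/-- On `U = {y₂ ≠ 0}` one has `[S₂, X₁] = 3X₁` and `[S₂, X₂] = −X₂`; in particular
`S₂` is an infinitesimal symmetry of the Monge distribution of `z' = y + (y'')^{1/3}`. -/
theorem symmetry_S₂ :
    ∀ p : Fin 5 → ℝ, p 3 ≠ 0 →
      lieBracket S₂ X₁ p = (3 : ℝ) • X₁ p ∧
      lieBracket S₂ X₂ p = -X₂ p := by
  intro p hp
  have hS := hasFDerivAt_S₂ p
  have hX1 : fderiv ℝ X₁ p = 0 :=
    (hasFDerivAt_const (![0, 0, 0, 1, 0] : Fin 5 → ℝ) p).fderiv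
  constructor
  · rw [lieBracket, hX1, hS.fderiv]
    funext i
    fin_cases i <;>
      simp [LS, X₁, ContinuousLinearMap.pi_apply, ContinuousLinearMap.proj_apply,
        ContinuousLinearMap.smul_apply, ContinuousLinearMap.neg_apply]
  · rw [lieBracket, hS.fderiv, (hasFDerivAt_X₂ hp).fderiv]
    have key := cbrt_key hp
    funext i
    fin_cases i <;>
      simp [LS, LX, X₂, S₂, ContinuousLinearMap.pi_apply, ContinuousLinearMap.proj_apply,
        ContinuousLinearMap.smul_apply, ContinuousLinearMap.neg_apply, smul_eq_mul] <;>
      ring_nf <;> ring_nf at key <;> linarith
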